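/- If a Banach space $X$ has property $\mathcal{E}'$ (every weak*-sequentially closed convex subset of $B_{X^*}$ is weak*-closed), then $X$ has property $(\mathcal{C})$ of Corson, i.e., every point in the weak*-closure of any convex set $C \subseteq B_{X^*}$ lies in the weak*-closure of a countable subset of $C$. -/

import Mathlib

open Filter Topology

/-- If a Banach space `X` has property `ℰ'` (every weak*-sequentially closed convex
subset of the dual unit ball is weak*-closed), then `X` has property (C) of Corson
in Pol's form. -/
theorem propE'_implies_propC
    (X : Type*) [NormedAddCommGroup X] [NormedSpace ℝ X] [CompleteSpace X]
    (B : Set (WeakDual ℝ X))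
    (hB : B = {f : WeakDual ℝ X | ‖WeakDual.toStrongDual f‖ ≤ 1})
    (hE' : ∀ A ⊆ B, Convex ℝ A →
      (∀ (u : ℕ → WeakDual ℝ X) (g : WeakDual ℝ X),
        (∀ n, u n ∈ A) → Tendsto u atTop (𝓝 g) → g ∈ A) →
      IsClosed A) :
    ∀ C ⊆ B, Convex ℝ C → ∀ f ∈ closure C,
      ∃ D ⊆ C, D.Countable ∧ f ∈ closure D := by
  intro C hCB hCconv f hf
  set A : Set (WeakDual ℝ X) := {g | ∃ D ⊆ C, D.Countable ∧ g ∈ closure D} with hA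
  have hBclosed : IsClosed B := by
    rw [hB]
    have := WeakDual.isClosed_closedBall (𝕜 := ℝ) (E := X) 0 1
    convert this using 1
    ext g
    simp [Metric.mem_closedBall, dist_eq_norm]
  have hAB : A ⊆ B := by
    rintro g ⟨D, hDC, _, hg⟩
    have : g ∈ closure B := closure_mono (hDC.trans hCB) hg
    rwa [hBclosed.closure_eq] at this
  have hAconv : Convex ℝ A := by
    rintro g1 ⟨D1, hD1, hc1, hg1⟩ g2 ⟨D2, hD2, hc2, hg2⟩ a b ha hb hab
    set D : Set (WeakDual ℝ X) :=
      (fun p : WeakDual ℝ X × WeakDual ℝ X => a • p.1 + b • p.2) '' (D1 ×ˢ D2) with hD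
    have hmem : ∀ x ∈ D1, ∀ y ∈ D2, a • x + b • y ∈ D := fun x hx y hy =>
      Set.mem_image_of_mem _ (Set.mk_mem_prod hx hy)
    refine ⟨D, ?_, (hc1.prod hc2).image _, ?_⟩
    · rintro _ ⟨⟨x, y⟩, ⟨hx, hy⟩, rfl⟩
      exact hCconv (hD1 hx) (hD2 hy) ha hb hab
    · exact map_mem_closure₂ (f := fun x y : WeakDual ℝ X => a • x + b • y)
        ((continuous_fst.const_smul a).add (continuous_snd.const_smul b)) hg1 hg2 hmem
  have hseq : ∀ (u : ℕ → WeakDual ℝ X) (g : WeakDual ℝ X),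
      (∀ n, u n ∈ A) → Tendsto u atTop (𝓝 g) → g ∈ A := by
    intro u g hu hug
    choose D hDC hDc hgD using hu
    refine ⟨⋃ n, D n, Set.iUnion_subset hDC, Set.countable_iUnion hDc, ?_⟩
    refine isClosed_closure.mem_of_tendsto hug (Eventually.of_forall fun n => ?_)
    exact closure_mono (Set.subset_iUnion D n) (hgD n)
  have hAclosed : IsClosed A := hE' A hAB hAconv hseq
  have hCsubA : C ⊆ A := fun c hc =>
    ⟨{c}, by simpa using hc, Set.countable_singleton c, subset_closure rfl⟩
  exact closure_minimal hCsubA hAclosed hf
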